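/- The number of finite sequences (a_1,...,a_{2m}) of nonzero integers (over all m ≥ 1) satisfying 2·Σ|a_i| − ℓ = c and Σ|a_i| − ℓ + 1 = b, where ℓ is the number of sign changes in the sequence, is: 2 if c ≥ 3 is odd and b = 2; 2^{b−2}·C(c−b, b−2) if c ≥ 3 and 3 ≤ b ≤ ⌈(c+1)/2⌉; and 0 otherwise. -/

import Mathlib

open Classical

/-- The number of sign changes in a finite sequence of integers. -/
def signChanges (l : List ℤ) : ℕ :=
  ((l.zip l.tail).filter (fun p => p.1 * p.2 < 0)).length

/-- The sum of the absolute values of the entries. -/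
def absSum (l : List ℤ) : ℕ := (l.map Int.natAbs).sum

/-- An even continued fraction representation: a nonempty even-length
sequence of nonzero integers. -/
def IsECF (l : List ℤ) : Prop :=
  l ≠ [] ∧ Even l.length ∧ ∀ x ∈ l, x ≠ 0

/-- Palindromic or anti-palindromic sequences. -/
def IsPalOrAnti (l : List ℤ) : Prop :=
  l.reverse = l ∨ l.reverse = l.map (fun x => -x)

/-- The set `E(c)` of even continued fractions with crossing number `c`. -/
def Ecross (c : ℕ) : Set (List ℤ) :=
  {l | IsECF l ∧ (2 * absSum l : ℤ) - signChanges l = c}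

/-- The set `E(c,b)` of even continued fractions with crossing number `c`
and braid index `b`. -/
def Eset (c b : ℕ) : Set (List ℤ) :=
  {l | IsECF l ∧ (2 * absSum l : ℤ) - signChanges l = c ∧
    (absSum l : ℤ) - signChanges l + 1 = b}

noncomputable def e (c b : ℕ) : ℕ := (Eset c b).ncard

noncomputable def eTot (c : ℕ) : ℕ := (Ecross c).ncard

noncomputable def ep (c b : ℕ) : ℕ := (Eset c b ∩ {l | IsPalOrAnti l}).ncard

noncomputable def epTot (c : ℕ) : ℕ := (Ecross c ∩ {l | IsPalOrAnti l}).ncard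


lemma signChanges_nil : signChanges [] = 0 := rfl
lemma signChanges_single (a : ℤ) : signChanges [a] = 0 := rfl
lemma signChanges_cons_cons (a b : ℤ) (t : List ℤ) :
    signChanges (a :: b :: t) = (if a * b < 0 then 1 else 0) + signChanges (b :: t) := by
  simp only [signChanges, List.tail_cons, List.zip_cons_cons, List.filter_cons]
  by_cases h : a * b < 0 <;> simp [h, Nat.add_comm]

lemma sign_pm {a : ℤ} (ha : a ≠ 0) : a.sign = 1 ∧ 0 < a ∨ a.sign = -1 ∧ a < 0 := by
  rcases lt_trichotomy a 0 with h | h | h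
  · exact Or.inr ⟨Int.sign_eq_neg_one_iff_neg.2 h, h⟩
  · exact absurd h ha
  · exact Or.inl ⟨Int.sign_eq_one_iff_pos.2 h, h⟩

def decL : ℤ → List (Bool × ℕ) → List ℤ
  | a, [] => [a]
  | a, (f, v) :: t => a :: decL ((if f then -a.sign else a.sign) * (v + 1 : ℕ)) t

lemma dec_ne_nil (a : ℤ) (t : List (Bool × ℕ)) : decL a t ≠ [] := by
  cases t with
  | nil => simp [decL]
  | cons p t => obtain ⟨f, v⟩ := p; simp [decL]

lemma length_dec (a : ℤ) (t : List (Bool × ℕ)) : (decL a t).length = t.length + 1 := by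
  induction t generalizing a with
  | nil => rfl
  | cons p t ih => obtain ⟨f, v⟩ := p; simp [decL, ih]

lemma next_natAbs {a : ℤ} (ha : a ≠ 0) (f : Bool) (v : ℕ) :
    ((if f then -a.sign else a.sign) * (v + 1 : ℕ)).natAbs = v + 1 := by
  rcases sign_pm ha with ⟨h, _⟩ | ⟨h, _⟩ <;> cases f <;> simp [h] <;> omega

lemma next_ne_zero {a : ℤ} (ha : a ≠ 0) (f : Bool) (v : ℕ) :
    (if f then -a.sign else a.sign) * (v + 1 : ℕ) ≠ 0 := by
  intro h
  have := next_natAbs ha f v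
  rw [h] at this
  simp at this

lemma next_sign_change {a : ℤ} (ha : a ≠ 0) (f : Bool) (v : ℕ) :
    (a * ((if f then -a.sign else a.sign) * (v + 1 : ℕ)) < 0) ↔ f = true := by
  have hv : (0:ℤ) < ((v:ℤ) + 1) := by positivity
  rcases sign_pm ha with ⟨h, h2⟩ | ⟨h, h2⟩ <;> cases f <;>
    simp [h] <;> push_cast <;> nlinarith

lemma head_dec (a : ℤ) (t : List (Bool × ℕ)) : (decL a t).head? = some a := by
  cases t with
  | nil => rfl
  | cons p t => obtain ⟨f, v⟩ := p; rfl

lemma mem_dec_ne_zero {a : ℤ} (ha : a ≠ 0) (t : List (Bool × ℕ)) :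
    ∀ x ∈ decL a t, x ≠ 0 := by
  induction t generalizing a with
  | nil => simpa [decL] using ha
  | cons p t ih =>
    obtain ⟨f, v⟩ := p
    intro x hx
    simp only [decL, List.mem_cons] at hx
    rcases hx with rfl | hx
    · exact ha
    · exact ih (next_ne_zero ha f v) x hx

lemma absSum_dec {a : ℤ} (ha : a ≠ 0) (t : List (Bool × ℕ)) :
    absSum (decL a t) = a.natAbs + (t.map (fun q => q.2 + 1)).sum := by
  induction t generalizing a with
  | nil => simp [decL, absSum]
  | cons p t ih =>
    obtain ⟨f, v⟩ := p
    simp only [decL, absSum, List.map_cons, List.sum_cons] at *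
    rw [ih (next_ne_zero ha f v), next_natAbs ha f v]
    try omega

lemma signChanges_dec {a : ℤ} (ha : a ≠ 0) (t : List (Bool × ℕ)) :
    signChanges (decL a t) = (t.map Prod.fst).count true := by
  induction t generalizing a with
  | nil => simp [decL, signChanges_single]
  | cons p t ih =>
    obtain ⟨f, v⟩ := p
    have hne := next_ne_zero ha f v
    have hcons : ∃ b rest, decL ((if f then -a.sign else a.sign) * (v + 1 : ℕ)) t
        = b :: rest ∧ b = (if f then -a.sign else a.sign) * (v + 1 : ℕ) := by
      cases hd : decL ((if f then -a.sign else a.sign) * (v + 1 : ℕ)) t with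
      | nil => exact absurd hd (dec_ne_nil _ _)
      | cons b rest =>
        refine ⟨b, rest, rfl, ?_⟩
        have := head_dec ((if f then -a.sign else a.sign) * (v + 1 : ℕ)) t
        rw [hd] at this
        exact (Option.some.inj this)
    obtain ⟨b, rest, hd, hb⟩ := hcons
    rw [show decL a ((f, v) :: t) = a :: decL ((if f then -a.sign else a.sign) * (v + 1 : ℕ)) t from rfl,
      hd, signChanges_cons_cons, ← hd, ih hne]
    subst hb
    rw [List.map_cons, List.count_cons]
    by_cases hf : a * ((if f then -a.sign else a.sign) * (v + 1 : ℕ)) < 0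
    · have hft : f = true := (next_sign_change ha f v).1 hf
      rw [if_pos hf, hft]
      simp [Nat.add_comm]
    · have hff : f = false := by
        rcases f with _ | _
        · rfl
        · exact absurd ((next_sign_change ha true v).2 rfl) hf
      rw [if_neg hf, hff]
      simp


lemma dec_injOn {a a' : ℤ} (ha : a ≠ 0) (ha' : a' ≠ 0) {t t' : List (Bool × ℕ)}
    (h : decL a t = decL a' t') : a = a' ∧ t = t' := by
  induction t generalizing a a' t' with
  | nil =>
    cases t' with
    | nil => simpa [decL] using h
    | cons p t' =>
      exfalso
      have := congrArg List.length h
      rw [length_dec, length_dec] at this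
      simp at this
  | cons p t ih =>
    obtain ⟨f, v⟩ := p
    cases t' with
    | nil =>
      exfalso
      have := congrArg List.length h
      rw [length_dec, length_dec] at this
      simp at this
    | cons p' t' =>
      obtain ⟨f', v'⟩ := p'
      rw [show decL a ((f,v)::t) = a :: decL ((if f then -a.sign else a.sign) * (v + 1 : ℕ)) t from rfl,
          show decL a' ((f',v')::t') = a' :: decL ((if f' then -a'.sign else a'.sign) * (v' + 1 : ℕ)) t' from rfl] at h
      obtain ⟨rfl, h2⟩ := List.cons.inj h
      -- heads of the tails
      have hh := congrArg List.head? h2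
      rw [head_dec, head_dec] at hh
      have hnext := Option.some.inj hh
      have hv : v = v' := by
        have := congrArg Int.natAbs hnext
        rw [next_natAbs ha f v, next_natAbs ha f' v'] at this
        omega
      have hf : f = f' := by
        have hiff : (f = true) ↔ (f' = true) := by
          rw [← next_sign_change ha f v, hnext, next_sign_change ha f' v']
        cases f <;> cases f' <;> revert hiff <;> decide
      subst hv; subst hf
      obtain ⟨-, rfl⟩ := ih (next_ne_zero ha f v) (next_ne_zero ha f v) h2
      exact ⟨rfl, rfl⟩

lemma dec_surj (l : List ℤ) (hne : l ≠ []) (h0 : ∀ x ∈ l, x ≠ 0) :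
    ∃ a t, a ≠ 0 ∧ decL a t = l := by
  induction l with
  | nil => exact absurd rfl hne
  | cons a l ih =>
    have ha : a ≠ 0 := h0 a (by simp)
    cases l with
    | nil => exact ⟨a, [], ha, rfl⟩
    | cons b l2 =>
      obtain ⟨b', t, hb', hdec⟩ := ih (by simp) (fun x hx => h0 x (by simp [hx]))
      have hb : b' = b := by
        have := congrArg List.head? hdec
        rw [head_dec] at this
        exact Option.some.inj this
      subst hb
      refine ⟨a, (decide (a * b' < 0), b'.natAbs - 1) :: t, ha, ?_⟩
      rw [show decL a ((decide (a * b' < 0), b'.natAbs - 1) :: t)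
          = a :: decL ((if decide (a * b' < 0) then -a.sign else a.sign) * ((b'.natAbs - 1) + 1 : ℕ)) t from rfl]
      have habs : ((b'.natAbs - 1) + 1 : ℕ) = b'.natAbs := by
        have := Int.natAbs_pos.2 hb'
        omega
      have hkey : (if decide (a * b' < 0) then -a.sign else a.sign) * ((b'.natAbs - 1) + 1 : ℕ) = b' := by
        rw [habs]
        by_cases hab : a * b' < 0
        · rw [if_pos (by simpa using hab)]
          have : a.sign * b'.sign = -1 := by
            rcases sign_pm ha with ⟨h1, h2⟩ | ⟨h1, h2⟩ <;> rcases sign_pm hb' with ⟨h3, h4⟩ | ⟨h3, h4⟩ <;>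
              simp [h1, h3] <;> nlinarith
          have hs : -a.sign = b'.sign := by
            rcases sign_pm ha with ⟨h1, _⟩ | ⟨h1, _⟩ <;> rw [h1] at this ⊢ <;> omega
          rw [hs, Int.sign_mul_natAbs]
        · rw [if_neg (by simpa using hab)]
          have : a.sign * b'.sign = 1 := by
            have : 0 < a * b' := by
              rcases (mul_ne_zero ha hb').lt_or_gt with h | h
              · exact absurd h hab
              · exact h
            rcases sign_pm ha with ⟨h1, h2⟩ | ⟨h1, h2⟩ <;> rcases sign_pm hb' with ⟨h3, h4⟩ | ⟨h3, h4⟩ <;>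
              simp [h1, h3] <;> nlinarith
          have hs : a.sign = b'.sign := by
            rcases sign_pm ha with ⟨h1, _⟩ | ⟨h1, _⟩ <;> rw [h1] at this ⊢ <;> omega
          rw [hs, Int.sign_mul_natAbs]
      rw [hkey, hdec]

open Finset

lemma myNcardBiUnion {ι α : Type*} (s : Finset ι) (f : ι → Set α)
    (hfin : ∀ i ∈ s, (f i).Finite)
    (hd : ∀ i ∈ s, ∀ j ∈ s, i ≠ j → Disjoint (f i) (f j)) :
    (⋃ i ∈ s, f i).ncard = ∑ i ∈ s, (f i).ncard := by
  classical
  induction s using Finset.induction with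
  | empty => simp
  | @insert a s hni ih =>
    rw [Finset.set_biUnion_insert, Finset.sum_insert hni,
      Set.ncard_union_eq ?_ (hfin a (by simp)) ?_, ih (fun i hi => hfin i (by simp [hi]))
        (fun i hi j hj hij => hd i (by simp [hi]) j (by simp [hj]) hij)]
    · rw [Set.disjoint_iUnion₂_right]
      intro i hi
      exact hd a (by simp) i (Finset.mem_insert_of_mem (by simpa using hi))
        (fun h => hni (by simpa using (h ▸ hi)))
    · exact Set.Finite.biUnion s.finite_toSet
        (fun i hi => hfin i (Finset.mem_insert_of_mem (by simpa using hi)))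

lemma B_spec : ∀ r k : ℕ, {bs : List Bool | bs.length = r ∧ bs.count true = k}.Finite ∧
    {bs : List Bool | bs.length = r ∧ bs.count true = k}.ncard = r.choose k := by
  intro r
  induction r with
  | zero =>
    intro k
    cases k with
    | zero =>
      have : {bs : List Bool | bs.length = 0 ∧ bs.count true = 0} = {([] : List Bool)} := by
        ext bs; simp [List.length_eq_zero_iff]; rintro rfl; simp
      rw [this]; simp
    | succ k =>
      have : {bs : List Bool | bs.length = 0 ∧ bs.count true = k + 1} = ∅ := by
        ext bs; simp [List.length_eq_zero_iff]; rintro rfl; simp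
      rw [this]; simp
  | succ r ih =>
    intro k
    cases k with
    | zero =>
      have hset : {bs : List Bool | bs.length = r + 1 ∧ bs.count true = 0}
          = List.cons false '' {bs : List Bool | bs.length = r ∧ bs.count true = 0} := by
        ext bs
        constructor
        · rintro ⟨hl, hc⟩
          cases bs with
          | nil => simp at hl
          | cons b bs' =>
            cases b
            · exact ⟨bs', ⟨by simpa using hl, by simpa using hc⟩, rfl⟩
            · simp [List.count_cons] at hc
        · rintro ⟨bs', ⟨hl, hc⟩, rfl⟩
          exact ⟨by simpa using hl, by simpa [List.count_cons] using hc⟩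
      rw [hset]
      refine ⟨Set.Finite.image _ (ih 0).1, ?_⟩
      rw [Set.ncard_image_of_injOn (fun x _ y _ h => by simpa using h), (ih 0).2]
      simp
    | succ k =>
      have hset : {bs : List Bool | bs.length = r + 1 ∧ bs.count true = k + 1}
          = List.cons true '' {bs : List Bool | bs.length = r ∧ bs.count true = k}
            ∪ List.cons false '' {bs : List Bool | bs.length = r ∧ bs.count true = k + 1} := by
        ext bs
        constructor
        · rintro ⟨hl, hc⟩
          cases bs with
          | nil => simp at hl
          | cons b bs' =>
            cases b
            · exact Or.inr ⟨bs', ⟨by simpa using hl, by simpa [List.count_cons] using hc⟩, rfl⟩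
            · refine Or.inl ⟨bs', ⟨by simpa using hl, ?_⟩, rfl⟩
              simp [List.count_cons] at hc
              omega
        · rintro (⟨bs', ⟨hl, hc⟩, rfl⟩ | ⟨bs', ⟨hl, hc⟩, rfl⟩) <;>
            refine ⟨by simpa using hl, by simp [List.count_cons, hc]⟩
      rw [hset]
      have f1 := Set.Finite.image (List.cons true) (ih k).1
      have f2 := Set.Finite.image (List.cons false) (ih (k+1)).1
      have hdisj : Disjoint (List.cons true '' {bs : List Bool | bs.length = r ∧ bs.count true = k})
          (List.cons false '' {bs : List Bool | bs.length = r ∧ bs.count true = k + 1}) := by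
        rw [Set.disjoint_left]
        rintro x ⟨y, _, rfl⟩ ⟨z, _, h⟩
        simp at h
      refine ⟨Set.Finite.union f1 f2, ?_⟩
      rw [Set.ncard_union_eq hdisj f1 f2,
        Set.ncard_image_of_injOn (fun x _ y _ h => by simpa using h),
        Set.ncard_image_of_injOn (fun x _ y _ h => by simpa using h),
        (ih k).2, (ih (k+1)).2, Nat.choose_succ_succ]

lemma sum_shifted_choose (M n : ℕ) :
    ∑ i ∈ range (M + 1), (i + n).choose n = (M + n + 1).choose (n + 1) := by
  induction M with
  | zero => simp
  | succ M ih =>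
    rw [Finset.sum_range_succ, ih]
    have h2 : M + 1 + n = M + n + 1 := by ring
    rw [h2, Nat.choose_succ_succ (M + n + 1) n]
    simp only [Nat.succ_eq_add_one]
    omega

lemma V_spec : ∀ n : ℕ, ∀ D : ℕ, {vs : List ℕ | vs.length = n + 1 ∧ vs.sum = D}.Finite ∧
    {vs : List ℕ | vs.length = n + 1 ∧ vs.sum = D}.ncard = (D + n).choose n := by
  intro n
  induction n with
  | zero =>
    intro D
    have : {vs : List ℕ | vs.length = 0 + 1 ∧ vs.sum = D} = {[D]} := by
      ext vs
      constructor
      · rintro ⟨hl, hs⟩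
        rw [List.length_eq_one_iff] at hl
        obtain ⟨a, rfl⟩ := hl
        simp at hs
        simp [hs]
      · rintro rfl; simp
    rw [this]; simp
  | succ n ih =>
    intro D
    have hset : {vs : List ℕ | vs.length = n + 1 + 1 ∧ vs.sum = D}
        = ⋃ a ∈ range (D + 1), List.cons a '' {vs : List ℕ | vs.length = n + 1 ∧ vs.sum = D - a} := by
      ext vs
      constructor
      · rintro ⟨hl, hs⟩
        cases vs with
        | nil => simp at hl
        | cons a vs' =>
          simp only [List.sum_cons] at hs
          exact Set.mem_iUnion.2 ⟨a, Set.mem_iUnion.2 ⟨by simp; omega,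
            ⟨vs', ⟨by simpa using hl, by omega⟩, rfl⟩⟩⟩
      · intro h
        simp only [Set.mem_iUnion] at h
        obtain ⟨a, ha, vs', ⟨hl, hs⟩, rfl⟩ := h
        simp only [Finset.mem_range] at ha
        exact ⟨by simpa using hl, by simp [hs]; omega⟩
    constructor
    · rw [hset]
      exact Set.Finite.biUnion (range (D+1)).finite_toSet
        (fun a _ => Set.Finite.image _ (ih (D - a)).1)
    · rw [hset, myNcardBiUnion _ _ (fun a _ => Set.Finite.image _ (ih (D - a)).1) ?_]
      · have : ∀ a ∈ range (D + 1),
            (List.cons a '' {vs : List ℕ | vs.length = n + 1 ∧ vs.sum = D - a}).ncard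
              = ((D - a) + n).choose n := by
          intro a _
          rw [Set.ncard_image_of_injOn (fun x _ y _ h => by simpa using h), (ih (D - a)).2]
        rw [Finset.sum_congr rfl this,
          show ∑ x ∈ range (D+1), (D - x + n).choose n
            = ∑ x ∈ range (D+1), ((D + 1 - 1 - x) + n).choose n from
              Finset.sum_congr rfl (fun i _ => by
                have h3 : D - i + n = D + 1 - 1 - i + n := by omega
                rw [h3]),
          Finset.sum_range_reflect (fun i => (i + n).choose n) (D+1)]
        exact sum_shifted_choose D n
      · intro i _ j _ hij
        rw [Set.disjoint_left]
        rintro x ⟨y, _, rfl⟩ ⟨z, _, h⟩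
        simp at h
        exact hij h.1.symm

open Finset

lemma parity_sums (K : ℕ) (hK : 1 ≤ K) :
    (∑ j ∈ range (K + 1), if Odd j then K.choose j else 0) = 2 ^ (K - 1)
    ∧ (∑ j ∈ range (K + 1), if Even j then K.choose j else 0) = 2 ^ (K - 1) := by
  have htot : (∑ j ∈ range (K + 1), if Even j then K.choose j else 0)
      + (∑ j ∈ range (K + 1), if Odd j then K.choose j else 0) = 2 ^ K := by
    rw [← Finset.sum_add_distrib]
    rw [← Nat.sum_range_choose K]
    apply Finset.sum_congr rfl
    intro j _
    rcases Nat.even_or_odd j with h | h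
    · simp [h, Nat.not_odd_iff_even.mpr h]
    · simp [h, Nat.not_even_iff_odd.mpr h]
  have halt : (∑ j ∈ range (K + 1), if Even j then (K.choose j : ℤ) else 0)
      - (∑ j ∈ range (K + 1), if Odd j then (K.choose j : ℤ) else 0) = 0 := by
    have hterm : ∀ j : ℕ, (if Even j then (K.choose j : ℤ) else 0)
        - (if Odd j then (K.choose j : ℤ) else 0) = (-1) ^ j * K.choose j := by
      intro j
      rcases Nat.even_or_odd j with h | h
      · simp [h, Nat.not_odd_iff_even.mpr h, Even.neg_one_pow h]
      · simp [h, Nat.not_even_iff_odd.mpr h, Odd.neg_one_pow h]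
    rw [← Finset.sum_sub_distrib, Finset.sum_congr rfl (fun j _ => hterm j),
      Int.alternating_sum_range_choose_of_ne (n := K) (by omega)]
  have heq : (∑ j ∈ range (K + 1), if Even j then K.choose j else 0)
      = (∑ j ∈ range (K + 1), if Odd j then K.choose j else 0) := by
    have h1 : ((∑ j ∈ range (K + 1), if Even j then K.choose j else 0) : ℤ)
        = ∑ j ∈ range (K + 1), if Even j then (K.choose j : ℤ) else 0 := by
      push_cast; rfl
    have h2 : ((∑ j ∈ range (K + 1), if Odd j then K.choose j else 0) : ℤ)
        = ∑ j ∈ range (K + 1), if Odd j then (K.choose j : ℤ) else 0 := by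
      push_cast; rfl
    have h3 : ((∑ j ∈ range (K + 1), if Even j then K.choose j else 0 : ℕ) : ℤ)
        = ((∑ j ∈ range (K + 1), if Odd j then K.choose j else 0 : ℕ) : ℤ) := by
      push_cast
      linarith [halt]
    exact_mod_cast h3
  have hpow : 2 ^ K = 2 ^ (K - 1) + 2 ^ (K - 1) := by
    nth_rewrite 1 [show K = (K - 1) + 1 by omega]
    rw [pow_succ]
    omega
  constructor <;> omega

lemma main_sum (M L : ℕ) (hL : L ≤ M) :
    ∑ r ∈ range (M + 1), (if Odd r then M.choose r * r.choose L else 0)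
      = M.choose L * ∑ j ∈ range (M - L + 1), (if Odd (L + j) then (M - L).choose j else 0) := by
  have h2 : ∑ r ∈ range (M + 1), (if Odd r then M.choose r * r.choose L else 0)
      = ∑ r ∈ Finset.Ico L (M + 1), (if Odd r then M.choose r * r.choose L else 0) := by
    refine (Finset.sum_subset (fun x hx => ?_) (fun x hx hnx => ?_)).symm
    · simp only [Finset.mem_Ico] at hx; simp; omega
    · simp only [Finset.mem_range] at hx
      simp only [Finset.mem_Ico, not_and, not_lt] at hnx
      have : x < L := by omega
      rw [Nat.choose_eq_zero_of_lt this]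
      simp
  have h3 : ∑ r ∈ Finset.Ico L (M + 1), (if Odd r then M.choose r * r.choose L else 0)
      = ∑ r ∈ Finset.Ico L (M + 1), (if Odd r then M.choose L * (M - L).choose (r - L) else 0) := by
    apply Finset.sum_congr rfl
    intro r hr
    simp only [Finset.mem_Ico] at hr
    have := Nat.choose_mul (n := M) (k := r) (s := L) hr.1
    rw [this]
  have h1 : ∑ r ∈ Finset.Ico L (M + 1), (if Odd r then M.choose L * (M - L).choose (r - L) else 0)
      = ∑ j ∈ range (M - L + 1), (if Odd (L + j) then M.choose L * (M - L).choose j else 0) := by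
    rw [Finset.sum_Ico_eq_sum_range]
    have hr : M + 1 - L = M - L + 1 := by omega
    rw [hr]
    apply Finset.sum_congr rfl
    intro j _
    rw [Nat.add_sub_cancel_left]
  rw [h2, h3, h1, Finset.mul_sum]
  apply Finset.sum_congr rfl
  intro j _
  rw [mul_ite, mul_zero]

open Finset

lemma signChanges_lt_length (l : List ℤ) (h : l ≠ []) : signChanges l + 1 ≤ l.length := by
  have h1 : signChanges l ≤ (l.zip l.tail).length := List.length_filter_le _ _
  rw [List.length_zip] at h1
  have h2 : l.tail.length = l.length - 1 := List.length_tail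
  have h3 : 1 ≤ l.length := List.length_pos_iff.2 h
  omega

lemma length_le_absSum (l : List ℤ) (h0 : ∀ x ∈ l, x ≠ 0) : l.length ≤ absSum l := by
  induction l with
  | nil => simp [absSum]
  | cons a t ih =>
    have ha : a.natAbs ≠ 0 := fun h => (h0 a (by simp)) (Int.natAbs_eq_zero.1 h)
    have := ih (fun x hx => h0 x (by simp [hx]))
    simp only [absSum, List.map_cons, List.sum_cons, List.length_cons] at *
    omega

lemma Eset_eq_image {c b S L : ℕ} (hc : (c : ℤ) = 2 * S - L) (hb : (b : ℤ) = (S : ℤ) - L + 1) :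
    Eset c b = (fun p : ℤ × List (Bool × ℕ) => decL p.1 p.2) ''
      {p : ℤ × List (Bool × ℕ) | p.1 ≠ 0 ∧ Odd p.2.length ∧
        p.1.natAbs + (p.2.map (fun q => q.2 + 1)).sum = S ∧ (p.2.map Prod.fst).count true = L} := by
  ext l
  constructor
  · rintro ⟨⟨hne, heven, h0⟩, h1, h2⟩
    obtain ⟨a, t, ha, rfl⟩ := dec_surj l hne h0
    have habs := absSum_dec ha t
    have hsc := signChanges_dec ha t
    have hXY : absSum (decL a t) = S ∧ signChanges (decL a t) = L := by
      constructor <;> omega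
    refine ⟨(a, t), ⟨ha, ?_, by rw [← habs, hXY.1], by rw [← hsc, hXY.2]⟩, rfl⟩
    have hld := length_dec a t
    rw [hld, Nat.even_add_one] at heven
    exact Nat.not_even_iff_odd.1 heven
  · rintro ⟨⟨a, t⟩, ⟨ha, hodd, hsum, hcount⟩, rfl⟩
    have habs := absSum_dec ha t
    have hsc := signChanges_dec ha t
    refine ⟨⟨dec_ne_nil a t, ?_, mem_dec_ne_zero ha t⟩, ?_, ?_⟩
    · rw [length_dec]
      simpa [Nat.even_add_one] using Nat.not_even_iff_odd.2 hodd
    · rw [habs, hsc, hsum, hcount]; omega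
    · rw [habs, hsc, hsum, hcount]; omega

def Pset (S L : ℕ) : Set (ℤ × List (Bool × ℕ)) :=
  {p : ℤ × List (Bool × ℕ) | p.1 ≠ 0 ∧ Odd p.2.length ∧
    p.1.natAbs + (p.2.map (fun q => q.2 + 1)).sum = S ∧ (p.2.map Prod.fst).count true = L}

def Qset (S L : ℕ) : Set (Bool × List Bool × List ℕ) :=
  {q | q.2.2.length = q.2.1.length + 1 ∧ Odd q.2.1.length ∧
    q.2.2.sum + q.2.2.length = S ∧ q.2.1.count true = L}

def Gmap (q : Bool × List Bool × List ℕ) : ℤ × List (Bool × ℕ) :=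
  (((if q.1 then 1 else -1) * ((q.2.2.headI + 1 : ℕ) : ℤ)), q.2.1.zip q.2.2.tail)

lemma zip_fst_snd {α β : Type*} (t : List (α × β)) :
    (t.map Prod.fst).zip (t.map Prod.snd) = t := by
  have := List.zip_unzip t
  rwa [List.unzip_eq_map] at this

lemma sum_map_succ (t : List (Bool × ℕ)) :
    (t.map (fun q => q.2 + 1)).sum = (t.map Prod.snd).sum + t.length := by
  induction t with
  | nil => simp
  | cons p t ih => simp [ih]; omega

lemma P_eq_image (S L : ℕ) : Pset S L = Gmap '' Qset S L := by
  ext ⟨a, t⟩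
  constructor
  · rintro ⟨ha, hodd, hsum, hcount⟩
    dsimp only at ha hodd hsum hcount
    have hab : 1 ≤ a.natAbs := Int.natAbs_pos.2 ha
    refine ⟨(decide (0 < a), t.map Prod.fst, (a.natAbs - 1) :: t.map Prod.snd),
      ⟨by simp, by simpa using hodd, ?_, by simpa using hcount⟩, ?_⟩
    · have hsm := sum_map_succ t
      simp only [List.sum_cons, List.length_cons, List.length_map]
      omega
    · have hfst : (if decide (0 < a) then (1:ℤ) else -1) * ((a.natAbs - 1 + 1 : ℕ) : ℤ) = a := by
        rcases sign_pm ha with ⟨_, h2⟩ | ⟨_, h2⟩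
        · rw [if_pos (by simpa using h2)]; omega
        · rw [if_neg (by simp; omega)]; omega
      simp only [Gmap, List.headI, List.tail_cons]
      rw [hfst, zip_fst_snd]
  · rintro ⟨⟨ε, bs, vs⟩, ⟨hlen, hodd, hsum, hcount⟩, hG⟩
    dsimp only at hlen hodd hsum hcount
    rw [← hG]
    have hvs : vs ≠ [] := by intro h; rw [h] at hlen; simp at hlen
    have hvseq : vs.headI :: vs.tail = vs := by
      cases vs with
      | nil => exact absurd rfl hvs
      | cons x xs => rfl
    have htl : vs.tail.length = bs.length := by
      rw [List.length_tail, hlen]; omega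
    have hzl : (bs.zip vs.tail).length = bs.length := by
      rw [List.length_zip, htl]; simp
    have hmf : (bs.zip vs.tail).map Prod.fst = bs := List.map_fst_zip (by omega)
    have hms : (bs.zip vs.tail).map Prod.snd = vs.tail := List.map_snd_zip (by omega)
    have hane : ((if ε then (1:ℤ) else -1) * ((vs.headI + 1 : ℕ) : ℤ)) ≠ 0 := by
      cases ε <;> simp <;> omega
    refine ⟨hane, by dsimp only [Gmap]; rw [hzl]; exact hodd, ?_, by dsimp only [Gmap]; rw [hmf]; exact hcount⟩
    dsimp only [Gmap]
    have hnatabs : ((if ε then (1:ℤ) else -1) * ((vs.headI + 1 : ℕ) : ℤ)).natAbs = vs.headI + 1 := by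
      cases ε <;> simp <;> omega
    rw [hnatabs, sum_map_succ, hms, hzl]
    have hsumtail : vs.headI + vs.tail.length + vs.tail.sum + 1 = vs.sum + vs.length := by
      conv_rhs => rw [← hvseq]
      simp
      omega
    omega

lemma Gmap_injOn (S L : ℕ) : Set.InjOn Gmap (Qset S L) := by
  rintro ⟨ε, bs, vs⟩ ⟨hlen, -, -, -⟩ ⟨ε', bs', vs'⟩ ⟨hlen', -, -, -⟩ heq
  dsimp only at hlen hlen'
  simp only [Gmap, Prod.mk.injEq] at heq
  obtain ⟨h1, h2⟩ := heq
  have hvs : vs.headI :: vs.tail = vs := by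
    cases vs with
    | nil => simp at hlen
    | cons x xs => rfl
  have hvs' : vs'.headI :: vs'.tail = vs' := by
    cases vs' with
    | nil => simp at hlen'
    | cons x xs => rfl
  have hee : ε = ε' ∧ vs.headI = vs'.headI := by
    cases ε <;> cases ε' <;> simp at h1 ⊢ <;> omega
  obtain ⟨rfl, hh⟩ := hee
  have htl : vs.tail.length = bs.length := by rw [List.length_tail, hlen]; omega
  have htl' : vs'.tail.length = bs'.length := by rw [List.length_tail, hlen']; omega
  have hbs : bs = bs' := by
    have h3 := congrArg (List.map Prod.fst) h2
    rwa [List.map_fst_zip (l₁ := bs) (l₂ := vs.tail) (by omega), List.map_fst_zip (l₁ := bs') (l₂ := vs'.tail) (by omega)] at h3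
  have hvt : vs.tail = vs'.tail := by
    have h3 := congrArg (List.map Prod.snd) h2
    rwa [List.map_snd_zip (l₁ := bs) (l₂ := vs.tail) (by omega), List.map_snd_zip (l₁ := bs') (l₂ := vs'.tail) (by omega)] at h3
  have : vs = vs' := by rw [← hvs, ← hvs', hh, hvt]
  simp [hbs, this]

lemma myNcardProd {α β : Type*} (s : Set α) (t : Set β) :
    (s ×ˢ t).ncard = s.ncard * t.ncard := by
  simp [← Nat.card_coe_set_eq, Nat.card_congr (Equiv.Set.prod s t), Nat.card_prod]

def piece (S L r : ℕ) : Set (Bool × List Bool × List ℕ) :=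
  (Set.univ : Set Bool) ×ˢ
    (({bs : List Bool | bs.length = r ∧ bs.count true = L} : Set (List Bool)) ×ˢ
      ({vs : List ℕ | vs.length = r + 1 ∧ vs.sum = S - 1 - r} : Set (List ℕ)))

lemma Q_eq_biUnion (S L : ℕ) :
    Qset S L = ⋃ r ∈ (range S).filter (fun r => Odd r), piece S L r := by
  ext ⟨ε, bs, vs⟩
  simp only [Set.mem_iUnion, Finset.mem_filter, Finset.mem_range, piece, Set.mem_prod,
    Set.mem_univ, true_and, Set.mem_setOf_eq, Qset]
  constructor
  · rintro ⟨hlen, hodd, hsum, hcount⟩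
    exact ⟨bs.length, ⟨by omega, hodd⟩, ⟨rfl, hcount⟩, by omega, by omega⟩
  · rintro ⟨r, ⟨hr, hodd⟩, ⟨hbl, hcount⟩, hvl, hvs⟩
    exact ⟨by omega, by rw [hbl]; exact hodd, by omega, hcount⟩

lemma piece_finite (S L r : ℕ) : (piece S L r).Finite :=
  Set.Finite.prod Set.finite_univ (Set.Finite.prod (B_spec r L).1 (V_spec r (S - 1 - r)).1)

lemma piece_ncard (S L r : ℕ) (hr : r < S) :
    (piece S L r).ncard = 2 * (r.choose L * (S - 1).choose r) := by
  rw [piece, myNcardProd, myNcardProd, (B_spec r L).2, (V_spec r (S - 1 - r)).2]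
  have h1 : (Set.univ : Set Bool).ncard = 2 := by
    rw [Set.ncard_univ, Nat.card_eq_fintype_card]
    simp
  have h2 : S - 1 - r + r = S - 1 := by omega
  rw [h1, h2]

lemma Q_ncard (S L : ℕ) :
    (Qset S L).ncard = ∑ r ∈ (range S).filter (fun r => Odd r), 2 * (r.choose L * (S - 1).choose r) := by
  rw [Q_eq_biUnion, myNcardBiUnion _ _ (fun r _ => piece_finite S L r) ?_]
  · apply Finset.sum_congr rfl
    intro r hr
    simp only [Finset.mem_filter, Finset.mem_range] at hr
    exact piece_ncard S L r hr.1
  · intro i _ j _ hij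
    rw [Set.disjoint_left]
    rintro ⟨ε, bs, vs⟩ hx hy
    simp only [piece, Set.mem_prod, Set.mem_setOf_eq] at hx hy
    exact hij (hx.2.1.1 ▸ hy.2.1.1)

open Finset

lemma e_eq_Q {c b S L : ℕ} (hc : (c : ℤ) = 2 * S - L) (hb : (b : ℤ) = (S : ℤ) - L + 1) :
    e c b = (Qset S L).ncard := by
  rw [e, Eset_eq_image hc hb]
  have h1 : (fun p : ℤ × List (Bool × ℕ) => decL p.1 p.2) '' (Pset S L) =
      (fun p : ℤ × List (Bool × ℕ) => decL p.1 p.2) ''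
      {p : ℤ × List (Bool × ℕ) | p.1 ≠ 0 ∧ Odd p.2.length ∧
        p.1.natAbs + (p.2.map (fun q => q.2 + 1)).sum = S ∧ (p.2.map Prod.fst).count true = L} := rfl
  rw [← h1, Set.ncard_image_of_injOn ?_, P_eq_image, Set.ncard_image_of_injOn (Gmap_injOn S L)]
  intro p hp q hq h
  obtain ⟨h1, h2⟩ := dec_injOn hp.1 hq.1 h
  exact Prod.ext h1 h2

lemma e_good (c b : ℕ) (hb2 : 2 ≤ b) (h2b : 2 * b ≤ c + 2) :
    e c b = 2 * ((c - b).choose (c + 2 - 2 * b) *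
      ∑ j ∈ range ((b - 2) + 1), if Odd ((c + 2 - 2 * b) + j) then (b - 2).choose j else 0) := by
  have hbc : b ≤ c := by omega
  set S := c + 1 - b with hS
  set L := c + 2 - 2 * b with hL
  have hc : (c : ℤ) = 2 * S - L := by omega
  have hb : (b : ℤ) = (S : ℤ) - L + 1 := by omega
  rw [e_eq_Q hc hb, Q_ncard]
  have hstep : ∀ r : ℕ, 2 * (r.choose L * (S - 1).choose r)
      = 2 * ((S - 1).choose r * r.choose L) := fun r => by ring
  rw [Finset.sum_congr rfl (fun r _ => hstep r), Finset.sum_filter]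
  have hstep2 : ∀ r : ℕ, (if Odd r then 2 * ((S - 1).choose r * r.choose L) else 0)
      = 2 * (if Odd r then (S - 1).choose r * r.choose L else 0) := fun r => by split <;> ring
  rw [Finset.sum_congr rfl (fun r _ => hstep2 r), ← Finset.mul_sum]
  have hSM : S = (c - b) + 1 := by omega
  have hM1 : S - 1 = c - b := by omega
  rw [hSM, show c - b + 1 - 1 = c - b from rfl, main_sum (c - b) L (by omega)]
  have hK : (c - b) - L = b - 2 := by omega
  rw [hK]

lemma Eset_empty {c b : ℕ} (hbad : ¬(2 ≤ b ∧ 2 * b ≤ c + 2)) : Eset c b = ∅ := by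
  ext l
  simp only [Eset, Set.mem_setOf_eq, Set.mem_empty_iff_false, iff_false]
  rintro ⟨⟨hne, heven, h0⟩, h1, h2⟩
  have hsc := signChanges_lt_length l hne
  have hlen := length_le_absSum l h0
  push_neg at hbad
  omega

theorem e_closed_formula (c b : ℕ) :
    e c b =
      if 3 ≤ c ∧ Odd c ∧ b = 2 then 2
      else if 3 ≤ c ∧ 3 ≤ b ∧ b ≤ (c + 2) / 2 then
        2 ^ (b - 2) * Nat.choose (c - b) (b - 2)
      else 0 := by
  by_cases hgood : 2 ≤ b ∧ 2 * b ≤ c + 2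
  · obtain ⟨hb2, h2b⟩ := hgood
    rcases eq_or_lt_of_le hb2 with hb2' | hb3
    · -- b = 2
      have hb : b = 2 := hb2'.symm
      subst hb
      have hc2 : 2 ≤ c := by omega
      rw [e_good c 2 (le_refl 2) h2b]
      have h4 : c + 2 - 2 * 2 = c - 2 := by omega
      rw [show (2 : ℕ) - 2 = 0 from rfl, h4, Finset.sum_range_one, Nat.choose_self]
      by_cases hodd : Odd (c - 2)
      · rw [if_pos (by simpa using hodd), if_pos ?_]
        · rw [Nat.choose_self]
        · rw [Nat.odd_iff] at hodd ⊢
          refine ⟨by omega, by omega, rfl⟩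
      · rw [if_neg (by simpa using hodd), if_neg ?_, if_neg (by rintro ⟨-, h3, -⟩; omega)]
        rintro ⟨h3c, hoc, -⟩
        rw [Nat.odd_iff] at hodd hoc
        omega
    · -- 3 ≤ b
      rw [e_good c b (by omega) h2b]
      have hK1 : 1 ≤ b - 2 := by omega
      have hsum : (∑ j ∈ range ((b - 2) + 1),
          if Odd ((c + 2 - 2 * b) + j) then (b - 2).choose j else 0) = 2 ^ (b - 2 - 1) := by
        rcases Nat.even_or_odd (c + 2 - 2 * b) with hpar | hpar
        · have hiff : ∀ j : ℕ, Odd ((c + 2 - 2 * b) + j) ↔ Odd j := fun j => by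
            rw [Nat.even_iff] at hpar
            rw [Nat.odd_iff, Nat.odd_iff]
            omega
          rw [Finset.sum_congr rfl (fun j _ => if_congr (hiff j) rfl rfl)]
          exact (parity_sums (b - 2) hK1).1
        · have hiff : ∀ j : ℕ, Odd ((c + 2 - 2 * b) + j) ↔ Even j := fun j => by
            rw [Nat.odd_iff] at hpar
            rw [Nat.odd_iff, Nat.even_iff]
            omega
          rw [Finset.sum_congr rfl (fun j _ => if_congr (hiff j) rfl rfl)]
          exact (parity_sums (b - 2) hK1).2
      rw [hsum, show c + 2 - 2 * b = (c - b) - (b - 2) from by omega,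
        Nat.choose_symm (by omega : b - 2 ≤ c - b)]
      rw [if_neg (by rintro ⟨-, -, h⟩; omega), if_pos ?_]
      · set k := b - 2 - 1 with hk
        have hbk : b - 2 = k + 1 := by omega
        rw [hbk, pow_succ]
        ring
      · refine ⟨by omega, by omega, ?_⟩
        rw [Nat.le_div_iff_mul_le (by norm_num)]
        omega
  · rw [e, Eset_empty hgood, Set.ncard_empty]
    rw [if_neg ?_, if_neg ?_]
    · rintro ⟨h3c, h3b, hdiv⟩
      rw [Nat.le_div_iff_mul_le (by norm_num)] at hdiv
      exact hgood ⟨by omega, by omega⟩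
    · rintro ⟨h3c, -, rfl⟩
      exact hgood ⟨le_refl 2, by omega⟩
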